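/- arXiv:2011.00657 — 2 statements merged into one kernel-verified Lean document; each statement's English description precedes it below -/
import Mathlib

section
/- Let G = ⟨v, h ∣ v² = 1, (vh)² = 1⟩ be the infinite dihedral group and let φ : G → ℤ/2ℤ be the homomorphism with φ(v) = 0 and φ(h) = 1. Then the kernel of φ is the subgroup generated by v and h², and this kernel is isomorphic to G itself (i.e., to ℤ/2ℤ * ℤ/2ℤ). -/
/-- Relators for the infinite dihedral group ⟨v, h ∣ v², (vh)²⟩, with
`true ↦ v` and `false ↦ h`. -/
def dihedralRels : Set (FreeGroup Bool) :=
  {FreeGroup.of true ^ 2, (FreeGroup.of true * FreeGroup.of false) ^ 2}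

namespace DihedralAux

abbrev G := PresentedGroup dihedralRels

abbrev v : G := PresentedGroup.of true
abbrev h : G := PresentedGroup.of false

lemma rel_one : ∀ r ∈ dihedralRels, PresentedGroup.mk dihedralRels r = 1 := fun r hr =>
  (QuotientGroup.eq_one_iff r).mpr (Subgroup.subset_normalClosure hr)

lemma v_sq : v * v = 1 := by
  have := rel_one (FreeGroup.of true ^ 2) (Or.inl rfl)
  simp [sq] at this; exact this

lemma v_inv : v⁻¹ = v := by
  rw [inv_eq_iff_mul_eq_one, v_sq]

lemma vh_sq : (v * h) * (v * h) = 1 := by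
  have := rel_one ((FreeGroup.of true * FreeGroup.of false) ^ 2) (Or.inr rfl)
  simp [sq] at this; exact this

lemma vhv : v * h * v = h⁻¹ := by
  have h1 : v * h = (v * h)⁻¹ := eq_inv_of_mul_eq_one_left vh_sq
  rw [mul_inv_rev, v_inv] at h1
  calc v * h * v = h⁻¹ * v * v := by rw [← h1]
    _ = h⁻¹ := by rw [mul_assoc, v_sq, mul_one]

lemma v_zpow (n : ℤ) : v * h ^ n * v = h ^ (-n) := by
  have key : v * h ^ n * v = (MulAut.conj v) (h ^ n) := by
    simp [MulAut.conj_apply, v_inv]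
  rw [key, map_zpow]
  have : (MulAut.conj v) h = h⁻¹ := by simp [MulAut.conj_apply, v_inv, vhv]
  rw [this, inv_zpow, zpow_neg]

lemma v_zpow' (n : ℤ) : v * h ^ n = h ^ (-n) * v := by
  have := v_zpow n
  calc v * h ^ n = (v * h ^ n * v) * v := by rw [mul_assoc, v_sq, mul_one]
    _ = h ^ (-n) * v := by rw [this]

/-- Normal form: every element is `h^n` or `h^n * v`. -/
lemma normal_form (g : G) : ∃ n : ℤ, g = h ^ n ∨ g = h ^ n * v := by
  have hg : g ∈ Subgroup.closure (Set.range (PresentedGroup.of : Bool → G)) := by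
    rw [PresentedGroup.closure_range_of]; trivial
  induction hg using Subgroup.closure_induction with
  | mem x hx =>
    obtain ⟨b, rfl⟩ := hx
    cases b
    · exact ⟨1, Or.inl (zpow_one h).symm⟩
    · exact ⟨0, Or.inr (by rw [zpow_zero, one_mul])⟩
  | one => exact ⟨0, Or.inl (zpow_zero h).symm⟩
  | mul a b _ _ ha hb =>
    obtain ⟨n, hn | hn⟩ := ha <;> obtain ⟨m, hm | hm⟩ := hb <;> subst hn hm
    · exact ⟨n + m, Or.inl (zpow_add h n m).symm⟩
    · exact ⟨n + m, Or.inr (by rw [← mul_assoc, ← zpow_add])⟩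
    · refine ⟨n - m, Or.inr ?_⟩
      rw [mul_assoc, v_zpow' m, ← mul_assoc, ← zpow_add, sub_eq_add_neg]
    · refine ⟨n - m, Or.inl ?_⟩
      rw [mul_assoc, ← mul_assoc v, v_zpow' m, mul_assoc, v_sq, mul_one,
        ← zpow_add, sub_eq_add_neg]
  | inv a _ ha =>
    obtain ⟨n, hn | hn⟩ := ha <;> subst hn
    · exact ⟨-n, Or.inl (by rw [← zpow_neg])⟩
    · refine ⟨n, Or.inr ?_⟩
      rw [mul_inv_rev, v_inv, ← zpow_neg, v_zpow', neg_neg]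

/-! The faithful-ish representation on `ℤ`. -/

def permMap : Bool → Equiv.Perm ℤ := fun b => if b then Equiv.neg ℤ else Equiv.addRight 1

lemma permMap_rels : ∀ r ∈ dihedralRels, FreeGroup.lift permMap r = 1 := by
  rintro r (rfl | rfl) <;>
  · apply Equiv.ext
    intro x
    simp [permMap, sq, Equiv.Perm.mul_apply]

noncomputable def ρ : G →* Equiv.Perm ℤ := PresentedGroup.toGroup permMap_rels

lemma ρ_h_zpow (n : ℤ) (x : ℤ) : (ρ (h ^ n)) x = x + n := by
  rw [map_zpow]
  have : ρ h = Equiv.addRight (1 : ℤ) := PresentedGroup.toGroup.of permMap_rels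
  rw [this]
  simp

lemma ρ_v (x : ℤ) : (ρ v) x = -x := by
  have : ρ v = Equiv.neg ℤ := PresentedGroup.toGroup.of permMap_rels
  rw [this]; rfl

/-! The injection `G → G`, `v ↦ v`, `h ↦ h²`, with range `⟨v, h²⟩`. -/

def sqMap : Bool → G := fun b => if b then v else h ^ 2

lemma sqMap_rels : ∀ r ∈ dihedralRels, FreeGroup.lift sqMap r = 1 := by
  rintro r (rfl | rfl)
  · simp only [map_pow, FreeGroup.lift_apply_of, sqMap, if_true]
    rw [sq]; exact v_sq
  · simp only [map_pow, map_mul, FreeGroup.lift_apply_of, sqMap, Bool.false_eq_true, if_true,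
      if_false]
    have h2 : v * h ^ 2 = h ^ (-2 : ℤ) * v := by
      have := v_zpow' 2
      rw [show h ^ (2 : ℤ) = h ^ (2 : ℕ) from zpow_ofNat h 2] at this
      exact this
    rw [sq]
    calc v * h ^ 2 * (v * h ^ 2) = (h ^ (-2 : ℤ) * v) * (v * h ^ 2) := by rw [h2]
      _ = h ^ (-2 : ℤ) * (v * v) * h ^ 2 := by group
      _ = h ^ (-2 : ℤ) * h ^ (2 : ℤ) := by
          rw [v_sq, mul_one, zpow_ofNat h 2]
      _ = 1 := by rw [← zpow_add]; norm_num

noncomputable def ψ : G →* G := PresentedGroup.toGroup sqMap_rels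

lemma ψ_v : ψ v = v := PresentedGroup.toGroup.of sqMap_rels

lemma ψ_h : ψ h = h ^ 2 := PresentedGroup.toGroup.of sqMap_rels

lemma ψ_h_zpow (n : ℤ) : ψ (h ^ n) = h ^ (2 * n) := by
  rw [map_zpow, ψ_h, ← zpow_ofNat h 2, ← zpow_mul]


lemma ψ_inj : Function.Injective ψ := by
  rw [injective_iff_map_eq_one]
  intro g hg
  obtain ⟨n, hn | hn⟩ := normal_form g <;> subst hn
  · rw [ψ_h_zpow] at hg
    have h0 := congrArg (fun g : G => (ρ g) 0) hg
    simp only [map_one, Equiv.Perm.one_apply, ρ_h_zpow, zero_add] at h0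
    have : n = 0 := by omega
    rw [this, zpow_zero]
  · exfalso
    rw [map_mul, ψ_h_zpow, ψ_v] at hg
    have h0 := congrArg (fun g : G => (ρ g) 0) hg
    have h1 := congrArg (fun g : G => (ρ g) 1) hg
    simp only [map_mul, map_one, Equiv.Perm.mul_apply, Equiv.Perm.one_apply, ρ_v,
      ρ_h_zpow] at h0 h1
    omega

lemma range_of_bool : Set.range (PresentedGroup.of : Bool → G) = {v, h} := by
  ext x
  constructor
  · rintro ⟨b, rfl⟩; cases b
    · exact Or.inr rfl
    · exact Or.inl rfl
  · rintro (rfl | rfl)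
    · exact ⟨true, rfl⟩
    · exact ⟨false, rfl⟩

lemma ψ_range : ψ.range = Subgroup.closure {v, h ^ 2} := by
  rw [MonoidHom.range_eq_map, ← PresentedGroup.closure_range_of dihedralRels,
    MonoidHom.map_closure, range_of_bool, Set.image_pair, ψ_v, ψ_h]

lemma even_zpow_mem {n : ℤ} (hn : (n : ZMod 2) = 0) :
    h ^ n ∈ Subgroup.closure ({v, h ^ 2} : Set G) := by
  obtain ⟨m, hm⟩ := (ZMod.intCast_zmod_eq_zero_iff_dvd n 2).mp hn
  have hn2 : n = 2 * m := by exact_mod_cast hm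
  subst hn2
  have : h ^ ((2 : ℤ) * m) = (h ^ 2) ^ m := by rw [← zpow_ofNat h 2, ← zpow_mul]
  rw [this]
  refine Subgroup.zpow_mem _ (Subgroup.subset_closure ?_) m
  right; rfl

lemma ofAdd_pow_eq_one {n : ℤ} (hg : Multiplicative.ofAdd (1 : ZMod 2) ^ n = 1) :
    (n : ZMod 2) = 0 := by
  have := congrArg Multiplicative.toAdd hg
  simp only [toAdd_zpow, toAdd_ofAdd, toAdd_one, smul_eq_mul, zsmul_eq_mul,
    mul_one] at this
  exact this

end DihedralAux

open DihedralAux in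
/-- If φ : ⟨v, h ∣ v², (vh)²⟩ → ℤ/2 satisfies φ(v) = 0, φ(h) = 1, then
ker φ = ⟨v, h²⟩ and ker φ is isomorphic to the group itself. -/
theorem stmt4 (φ : PresentedGroup dihedralRels →* Multiplicative (ZMod 2))
    (hv : φ (PresentedGroup.of true) = Multiplicative.ofAdd 0)
    (hh : φ (PresentedGroup.of false) = Multiplicative.ofAdd 1) :
    φ.ker = Subgroup.closure
        {PresentedGroup.of true, PresentedGroup.of false ^ 2} ∧
      Nonempty (φ.ker ≃* PresentedGroup dihedralRels) := by
  have hv' : φ v = 1 := by rw [hv]; rfl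
  have hker : φ.ker = Subgroup.closure {v, h ^ 2} := by
    apply le_antisymm
    · intro g hg
      rw [MonoidHom.mem_ker] at hg
      obtain ⟨n, hn | hn⟩ := normal_form g <;> subst hn
      · rw [map_zpow, hh] at hg
        exact even_zpow_mem (ofAdd_pow_eq_one hg)
      · rw [map_mul, map_zpow, hh, hv', mul_one] at hg
        refine Subgroup.mul_mem _ (even_zpow_mem (ofAdd_pow_eq_one hg))
          (Subgroup.subset_closure ?_)
        left; rfl
    · rw [Subgroup.closure_le]
      rintro x (rfl | rfl)
      · exact hv'
      · have : φ (h ^ 2) = 1 := by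
          rw [map_pow, hh, ← ofAdd_nsmul]
          decide
        exact this
  refine ⟨hker, ?_⟩
  have hkr : φ.ker = ψ.range := by rw [hker, ψ_range]
  exact ⟨(MulEquiv.subgroupCongr hkr).trans (MonoidHom.ofInjective ψ_inj).symm⟩
end

section
/- Let G = ⟨v, h ∣ v² = 1, (vh)² = 1⟩ be the infinite dihedral group and let φ : G → ℤ/2ℤ be the homomorphism with φ(v) = 1 and φ(h) = 1. Then the kernel of φ is the subgroup generated by hv and h², and this kernel is isomorphic to G itself. -/
namespace Dih5

abbrev G := PresentedGroup dihedralRels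

noncomputable def V : G := PresentedGroup.of true
noncomputable def H : G := PresentedGroup.of false

lemma rel_mem (r : FreeGroup Bool) (hr : r ∈ dihedralRels) :
    PresentedGroup.mk dihedralRels r = 1 := by
  refine (QuotientGroup.eq_one_iff _).2 ?_
  exact Subgroup.subset_normalClosure hr

lemma rel1 : V * V = 1 := by
  have := rel_mem (FreeGroup.of true ^ 2) (Or.inl rfl)
  simpa [V, PresentedGroup.of, sq, map_mul] using this

lemma rel2 : (V * H) * (V * H) = 1 := by
  have := rel_mem ((FreeGroup.of true * FreeGroup.of false) ^ 2) (Or.inr rfl)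
  simpa [V, H, PresentedGroup.of, sq, map_mul, mul_assoc] using this

lemma V_inv : V⁻¹ = V := by
  rw [inv_eq_iff_mul_eq_one]; exact rel1

lemma VHV : V * H * V = H⁻¹ := by
  have h2 := rel2
  have : V * H = (V * H)⁻¹ := by
    rw [eq_inv_iff_mul_eq_one]; exact h2
  rw [mul_inv_rev, V_inv] at this
  rw [this, mul_assoc, rel1, mul_one]

lemma VHzV (m : ℤ) : V * H ^ m * V = H ^ (-m) := by
  have conj : V * H ^ m * V⁻¹ = (V * H * V⁻¹) ^ m := by
    simpa [MulAut.conj_apply] using (map_zpow (MulAut.conj V) H m)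
  rw [V_inv] at conj
  rw [conj, VHV, inv_zpow, zpow_neg]

lemma VHz (m : ℤ) : V * H ^ m = H ^ (-m) * V := by
  have := VHzV m
  calc V * H ^ m = (V * H ^ m * V) * V := by rw [mul_assoc, rel1, mul_one]
    _ = H ^ (-m) * V := by rw [this]

/-- Normal form subgroup -/
noncomputable def normalSub : Subgroup G where
  carrier := {g | ∃ n : ℤ, g = H ^ n ∨ g = H ^ n * V}
  one_mem' := ⟨0, Or.inl (by simp)⟩
  mul_mem' := by
    rintro a b ⟨n, hn | hn⟩ ⟨m, hm | hm⟩ <;> subst hn hm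
    · exact ⟨n + m, Or.inl (by rw [zpow_add])⟩
    · exact ⟨n + m, Or.inr (by rw [zpow_add, mul_assoc])⟩
    · refine ⟨n - m, Or.inr ?_⟩
      rw [mul_assoc, VHz m, ← mul_assoc, ← zpow_add]
      ring_nf
    · refine ⟨n - m, Or.inl ?_⟩
      have key : V * (H ^ m * V) = H ^ (-m) := by
        rw [← mul_assoc, VHz m, mul_assoc, rel1, mul_one]
      rw [mul_assoc, key, ← zpow_add]
      ring_nf
  inv_mem' := by
    rintro a ⟨n, hn | hn⟩ <;> subst hn
    · exact ⟨-n, Or.inl (by rw [← zpow_neg])⟩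
    · refine ⟨n, Or.inr ?_⟩
      rw [mul_inv_rev, V_inv, ← zpow_neg, VHz (-n), neg_neg]

lemma normal_form (g : G) : ∃ n : ℤ, g = H ^ n ∨ g = H ^ n * V := by
  have := PresentedGroup.generated_by dihedralRels normalSub (fun j => ?_) g
  · exact this
  · cases j
    · exact ⟨1, Or.inl (by simp [H])⟩
    · exact ⟨0, Or.inr (by simp [V])⟩

/-- separation hom to DihedralGroup 0 -/
noncomputable def π : G →* DihedralGroup 0 :=
  PresentedGroup.toGroup (f := fun b => if b then DihedralGroup.sr 0 else DihedralGroup.r 1)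
    (by
      rintro r (rfl | rfl) <;> simp [sq, map_mul] <;> decide)

lemma π_V : π V = DihedralGroup.sr 0 := PresentedGroup.toGroup.of _
lemma π_H : π H = DihedralGroup.r 1 := PresentedGroup.toGroup.of _

lemma r_one_zpow (m : ℤ) : (DihedralGroup.r 1 : DihedralGroup 0) ^ m = DihedralGroup.r m := by
  induction m using Int.induction_on with
  | zero => rfl
  | succ k ih => rw [zpow_add, ih, zpow_one]; exact DihedralGroup.r_mul_r _ _
  | pred k ih =>
      rw [sub_eq_add_neg, zpow_add, ih]
      have : (DihedralGroup.r 1 : DihedralGroup 0) ^ (-1 : ℤ) = DihedralGroup.r (-1) := rfl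
      rw [this]; exact DihedralGroup.r_mul_r _ _

lemma H_zpow_eq_one {m : ℤ} (h : H ^ m = 1) : m = 0 := by
  have := congrArg π h
  rw [map_zpow, π_H, map_one, r_one_zpow] at this
  have : (m : ZMod 0) = 0 := by
    exact DihedralGroup.r.inj this
  exact_mod_cast this

lemma H_zpow_V_ne_one (m : ℤ) : H ^ m * V ≠ 1 := by
  intro h
  have := congrArg π h
  rw [map_mul, map_zpow, π_H, π_V, map_one, r_one_zpow] at this
  have h2 : DihedralGroup.sr (0 - (m : ZMod 0)) = (DihedralGroup.r 0 : DihedralGroup 0) := this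
  cases h2

end Dih5

namespace Dih5

lemma VH : V * H = H⁻¹ * V := by
  have h := VHV
  have h2 : V * H * V * V = H⁻¹ * V := by rw [h]
  rwa [mul_assoc (V * H), rel1, mul_one] at h2

lemma HV_sq : (H * V) * (H * V) = 1 := by
  have h1 : (H * V) * (H * V) = H * (V * H) * V := by group
  have h2 : H * (H⁻¹ * V) * V = V * V := by group
  rw [h1, VH, h2, rel1]

lemma VHH : V * H ^ (2 : ℕ) = H ^ (-2 : ℤ) * V := by
  have := VHz 2
  rw [show ((2:ℤ)) = ((2:ℕ):ℤ) by norm_num, zpow_natCast] at this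
  exact this

lemma psirel2 : ((H * V) * H ^ (2:ℕ)) * ((H * V) * H ^ (2:ℕ)) = 1 := by
  have key : H * V * H ^ (2:ℕ) = H ^ (-1 : ℤ) * V := by
    rw [mul_assoc, VHH, ← mul_assoc]
    congr 1
    rw [show H * H ^ (-2:ℤ) = H ^ (1:ℤ) * H ^ (-2:ℤ) by rw [zpow_one], ← zpow_add]
    norm_num
  rw [key]
  have h1 : H ^ (-1:ℤ) * V * (H ^ (-1:ℤ) * V) = H ^ (-1:ℤ) * (V * H ^ (-1:ℤ)) * V := by group
  have h2 : V * H ^ (-1 : ℤ) = H ^ (1:ℤ) * V := by simpa using VHz (-1)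
  rw [h1, h2]
  have h3 : H ^ (-1:ℤ) * (H ^ (1:ℤ) * V) * V = V * V := by group
  rw [h3, rel1]

noncomputable def ψ : G →* G :=
  PresentedGroup.toGroup (f := fun b => if b then H * V else H ^ 2)
    (by
      rintro r (rfl | rfl)
      · simpa [sq, map_mul] using HV_sq
      · simpa [sq, map_mul, mul_assoc] using psirel2)

lemma ψ_V : ψ V = H * V := PresentedGroup.toGroup.of _
lemma ψ_H : ψ H = H ^ 2 := PresentedGroup.toGroup.of _

lemma range_of_eq : (Set.range (PresentedGroup.of : Bool → G)) = {V, H} := by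
  ext x
  constructor
  · rintro ⟨b, rfl⟩; cases b
    · exact Or.inr rfl
    · exact Or.inl rfl
  · rintro (rfl | rfl)
    · exact ⟨true, rfl⟩
    · exact ⟨false, rfl⟩

lemma range_ψ : ψ.range = Subgroup.closure {H * V, H ^ 2} := by
  have h1 : ψ.range = Subgroup.map ψ ⊤ := by rw [← MonoidHom.range_eq_map]
  rw [h1, ← PresentedGroup.closure_range_of dihedralRels, MonoidHom.map_closure,
    range_of_eq, Set.image_pair, ψ_V, ψ_H]

lemma ψ_inj : Function.Injective ψ := by
  rw [injective_iff_map_eq_one]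
  intro g hg
  obtain ⟨n, rfl | rfl⟩ := normal_form g
  · rw [map_zpow, ψ_H, ← zpow_natCast H 2, ← zpow_mul] at hg
    have := H_zpow_eq_one hg
    have hn : n = 0 := by omega
    rw [hn, zpow_zero]
  · exfalso
    rw [map_mul, map_zpow, ψ_H, ψ_V, ← zpow_natCast H 2, ← zpow_mul, ← mul_assoc,
      ← zpow_one H, ← zpow_mul, ← zpow_add] at hg
    exact H_zpow_V_ne_one _ hg

end Dih5

open Dih5

/-- If φ : ⟨v, h ∣ v², (vh)²⟩ → ℤ/2 satisfies φ(v) = 1, φ(h) = 1, then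
ker φ = ⟨hv, h²⟩ and ker φ is isomorphic to the group itself. -/
theorem stmt5 (φ : PresentedGroup dihedralRels →* Multiplicative (ZMod 2))
    (hv : φ (PresentedGroup.of true) = Multiplicative.ofAdd 1)
    (hh : φ (PresentedGroup.of false) = Multiplicative.ofAdd 1) :
    φ.ker = Subgroup.closure
        {PresentedGroup.of false * PresentedGroup.of true, PresentedGroup.of false ^ 2} ∧
      Nonempty (φ.ker ≃* PresentedGroup dihedralRels) := by
  have hv' : φ V = Multiplicative.ofAdd 1 := hv
  have hh' : φ H = Multiplicative.ofAdd 1 := hh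
  have hsets : ({PresentedGroup.of false * PresentedGroup.of true,
      PresentedGroup.of false ^ 2} : Set (PresentedGroup dihedralRels)) = {H * V, H ^ 2} := rfl
  have hφHz : ∀ n : ℤ, φ (H ^ n) = Multiplicative.ofAdd ((n : ZMod 2)) := by
    intro n
    rw [map_zpow, hh', ← ofAdd_zsmul]
    norm_num
  have hle : Subgroup.closure {H * V, H ^ 2} ≤ φ.ker := by
    rw [Subgroup.closure_le]
    rintro x (rfl | rfl)
    · simp only [SetLike.mem_coe, MonoidHom.mem_ker, map_mul, hv', hh']
      decide
    · simp only [SetLike.mem_coe, MonoidHom.mem_ker, map_pow, hh']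
      decide
  have hker : φ.ker = Subgroup.closure {H * V, H ^ 2} := by
    refine le_antisymm ?_ hle
    intro g hg
    rw [MonoidHom.mem_ker] at hg
    obtain ⟨n, rfl | rfl⟩ := normal_form g
    · rw [hφHz] at hg
      have h2 : ((n : ZMod 2)) = 0 := by
        have := congrArg Multiplicative.toAdd hg
        simpa using this
      obtain ⟨k, hk⟩ := (ZMod.intCast_zmod_eq_zero_iff_dvd n 2).mp h2
      have hn : n = 2 * k := by exact_mod_cast hk
      have hpow : H ^ n = (H ^ 2) ^ k := by
        rw [← zpow_natCast H 2, ← zpow_mul, hn]; norm_num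
      rw [hpow]
      exact Subgroup.zpow_mem _ (Subgroup.subset_closure (show H ^ 2 ∈ ({H * V, H ^ 2} : Set G) from Or.inr rfl)) k
    · rw [map_mul, hφHz, hv'] at hg
      have h2 : ((n : ZMod 2)) + 1 = 0 := by
        have := congrArg Multiplicative.toAdd hg
        simpa using this
      have h3 : ((n + 1 : ℤ) : ZMod 2) = 0 := by push_cast; exact h2
      obtain ⟨k, hk⟩ := (ZMod.intCast_zmod_eq_zero_iff_dvd (n+1) 2).mp h3
      have hn : n = 2 * k - 2 + 1 := by omega
      have hdec : H ^ n * V = (H ^ 2) ^ (k - 1) * (H * V) := by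
        have e1 : ((H ^ 2) ^ (k - 1) : _) = H ^ (2 * (k - 1) : ℤ) := by
          rw [← zpow_natCast H 2, ← zpow_mul]; norm_num
        rw [e1, ← mul_assoc, ← zpow_add_one]
        rw [show (2 * (k - 1) + 1 : ℤ) = n by omega]
      rw [hdec]
      exact Subgroup.mul_mem _
        (Subgroup.zpow_mem _ (Subgroup.subset_closure (show H ^ 2 ∈ ({H * V, H ^ 2} : Set G) from Or.inr rfl)) _)
        (Subgroup.subset_closure (show H * V ∈ ({H * V, H ^ 2} : Set G) from Or.inl rfl))
  refine ⟨by rw [hsets, hker], ?_⟩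
  have hkr : φ.ker = ψ.range := by rw [hker, range_ψ]
  exact ⟨(MulEquiv.subgroupCongr hkr).trans (MonoidHom.ofInjective ψ_inj).symm⟩
end
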